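/- Any execution of the maximal matching algorithm under the distributed adversarial daemon on a graph with n nodes and m edges reaches a stable configuration after at most 3n + 2m steps. -/

import Mathlib

structure Config (V : Type*) where
  p : V → Option V
  m : V → Bool

variable {V : Type*}

def PRmarried (G : SimpleGraph V) (p : V → Option V) (i : V) : Prop :=
  ∃ j, G.Adj i j ∧ p i = some j ∧ p j = some i

def PRwaiting (G : SimpleGraph V) (p : V → Option V) (i : V) : Prop :=
  ∃ j, G.Adj i j ∧ p i = some j ∧ p j ≠ some i ∧ ¬ PRmarried G p j

def PRcondemned (G : SimpleGraph V) (p : V → Option V) (i : V) : Prop :=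
  ∃ j, G.Adj i j ∧ p i = some j ∧ p j ≠ some i ∧ PRmarried G p j

def PRdead (G : SimpleGraph V) (p : V → Option V) (i : V) : Prop :=
  p i = none ∧ ∀ j, G.Adj i j → PRmarried G p j

def PRfree (G : SimpleGraph V) (p : V → Option V) (i : V) : Prop :=
  p i = none ∧ ∃ j, G.Adj i j ∧ ¬ PRmarried G p j

def Valid (G : SimpleGraph V) (C : Config V) : Prop :=
  ∀ i j, C.p i = some j → G.Adj i j

section Rules
variable [LinearOrder V]

def UpdateEnabled (G : SimpleGraph V) (C : Config V) (i : V) : Prop :=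
  ¬ (C.m i = true ↔ PRmarried G C.p i)

def MarriageEnabled (G : SimpleGraph V) (C : Config V) (i : V) : Prop :=
  (C.m i = true ↔ PRmarried G C.p i) ∧ C.p i = none ∧ ∃ j, G.Adj i j ∧ C.p j = some i

def SeductionEnabled (G : SimpleGraph V) (C : Config V) (i : V) : Prop :=
  (C.m i = true ↔ PRmarried G C.p i) ∧ C.p i = none ∧
    (∀ k, G.Adj i k → C.p k ≠ some i) ∧
    ∃ j, G.Adj i j ∧ C.p j = none ∧ i < j ∧ C.m j = false

def AbandonmentEnabled (G : SimpleGraph V) (C : Config V) (i : V) : Prop :=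
  (C.m i = true ↔ PRmarried G C.p i) ∧
    ∃ j, G.Adj i j ∧ C.p i = some j ∧ C.p j ≠ some i ∧ (C.m j = true ∨ j ≤ i)

def Eligible (G : SimpleGraph V) (C : Config V) (i : V) : Prop :=
  UpdateEnabled G C i ∨ MarriageEnabled G C i ∨ SeductionEnabled G C i ∨ AbandonmentEnabled G C i

def Stable (G : SimpleGraph V) (C : Config V) : Prop := ∀ i, ¬ Eligible G C i

def Unchanged (C C' : Config V) (i : V) : Prop := C'.p i = C.p i ∧ C'.m i = C.m i

def DoesUpdate (G : SimpleGraph V) (C C' : Config V) (i : V) : Prop :=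
  UpdateEnabled G C i ∧ C'.p i = C.p i ∧ (C'.m i = true ↔ PRmarried G C.p i)

def DoesMarriageTo (G : SimpleGraph V) (C C' : Config V) (i j : V) : Prop :=
  MarriageEnabled G C i ∧ G.Adj i j ∧ C.p j = some i ∧ C'.p i = some j ∧ C'.m i = C.m i

def DoesSeductionTo (G : SimpleGraph V) (C C' : Config V) (i j : V) : Prop :=
  SeductionEnabled G C i ∧ G.Adj i j ∧ C.p j = none ∧ i < j ∧ C.m j = false ∧
    (∀ k, G.Adj i k → C.p k = none → i < k → C.m k = false → k ≤ j) ∧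
    C'.p i = some j ∧ C'.m i = C.m i

def DoesAbandonmentFrom (G : SimpleGraph V) (C C' : Config V) (i j : V) : Prop :=
  AbandonmentEnabled G C i ∧ C.p i = some j ∧ C'.p i = none ∧ C'.m i = C.m i

def Moves (G : SimpleGraph V) (C C' : Config V) (i : V) : Prop :=
  DoesUpdate G C C' i ∨ (∃ j, DoesMarriageTo G C C' i j) ∨
    (∃ j, DoesSeductionTo G C C' i j) ∨ (∃ j, DoesAbandonmentFrom G C C' i j)

def Step (G : SimpleGraph V) (C C' : Config V) : Prop :=
  (∃ i, Moves G C C' i) ∧ ∀ i, Moves G C C' i ∨ Unchanged C C' i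

def MSAMoveTo (G : SimpleGraph V) (C C' : Config V) (i j : V) : Prop :=
  DoesMarriageTo G C C' i j ∨ DoesSeductionTo G C C' i j ∨ DoesAbandonmentFrom G C C' i j

def IJMove (G : SimpleGraph V) (C C' : Config V) (i j : V) : Prop :=
  MSAMoveTo G C C' i j ∨ MSAMoveTo G C C' j i

end Rules

section Aux
set_option linter.unusedSectionVars false

open Classical

variable [LinearOrder V] (G : SimpleGraph V)

/-- Per-node update potential. -/
noncomputable def upot (C : Config V) (v : V) : ℕ :=
  (if C.m v = true ↔ PRmarried G C.p v then 0 else 1) +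
  (if PRmarried G C.p v then 0 else 1)

/-- Per-(ordered)-edge potential; intended for `i < j`. -/
noncomputable def fpot (C : Config V) (i j : V) : ℕ :=
  if C.p i = some j ∧ C.p j = some i then 0
  else if PRmarried G C.p j then (if C.p i = some j then 1 else 0)
  else if PRmarried G C.p i then (if C.p j = some i then 1 else 0)
  else if C.p i = some j then (if C.m j = true then 3 else 1)
  else if C.p j = some i then 3
  else 2

noncomputable def epot (C : Config V) : Sym2 V → ℕ :=
  Sym2.lift ⟨fun i j => fpot G C (min i j) (max i j), by
    intro i j; simp only [min_comm, max_comm]⟩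

noncomputable def pot [Fintype V] [DecidableRel G.Adj] (C : Config V) : ℕ :=
  (∑ v, upot G C v) + ∑ s ∈ G.edgeFinset, epot G C s

variable {G}

lemma upot_le_two (C : Config V) (v : V) : upot G C v ≤ 2 := by
  unfold upot; split_ifs <;> omega

lemma fpot_le_three (C : Config V) (i j : V) : fpot G C i j ≤ 3 := by
  unfold fpot; split_ifs <;> omega


lemma prm_some {C : Config V} {v : V} (h : PRmarried G C.p v) : ∃ k, C.p v = some k := by
  obtain ⟨k, _, hk, _⟩ := h; exact ⟨k, hk⟩

lemma not_prm_none {C : Config V} {v : V} (h : C.p v = none) : ¬ PRmarried G C.p v := by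
  intro hm; obtain ⟨k, hk⟩ := prm_some hm; rw [h] at hk; exact absurd hk (by simp)

section FpotEval
variable {C : Config V} {i j : V}

lemma fpot_pair (h1 : C.p i = some j) (h2 : C.p j = some i) : fpot G C i j = 0 := by
  unfold fpot; rw [if_pos ⟨h1, h2⟩]

lemma fpot_mj1 (h0 : ¬(C.p i = some j ∧ C.p j = some i)) (hMj : PRmarried G C.p j)
    (ha : C.p i = some j) : fpot G C i j = 1 := by
  unfold fpot; rw [if_neg h0, if_pos hMj, if_pos ha]

lemma fpot_mj0 (h0 : ¬(C.p i = some j ∧ C.p j = some i)) (hMj : PRmarried G C.p j)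
    (ha : C.p i ≠ some j) : fpot G C i j = 0 := by
  unfold fpot; rw [if_neg h0, if_pos hMj, if_neg ha]

lemma fpot_mi1 (h0 : ¬(C.p i = some j ∧ C.p j = some i)) (hMj : ¬ PRmarried G C.p j)
    (hMi : PRmarried G C.p i) (hb : C.p j = some i) : fpot G C i j = 1 := by
  unfold fpot; rw [if_neg h0, if_neg hMj, if_pos hMi, if_pos hb]

lemma fpot_mi0 (h0 : ¬(C.p i = some j ∧ C.p j = some i)) (hMj : ¬ PRmarried G C.p j)
    (hMi : PRmarried G C.p i) (hb : C.p j ≠ some i) : fpot G C i j = 0 := by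
  unfold fpot; rw [if_neg h0, if_neg hMj, if_pos hMi, if_neg hb]

lemma fpot_a3 (hMj : ¬ PRmarried G C.p j) (hMi : ¬ PRmarried G C.p i)
    (ha : C.p i = some j) (hb : C.p j ≠ some i) (hm : C.m j = true) : fpot G C i j = 3 := by
  unfold fpot; rw [if_neg (fun h => hb h.2), if_neg hMj, if_neg hMi, if_pos ha, if_pos hm]

lemma fpot_a1 (hMj : ¬ PRmarried G C.p j) (hMi : ¬ PRmarried G C.p i)
    (ha : C.p i = some j) (hb : C.p j ≠ some i) (hm : C.m j ≠ true) : fpot G C i j = 1 := by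
  unfold fpot; rw [if_neg (fun h => hb h.2), if_neg hMj, if_neg hMi, if_pos ha, if_neg hm]

lemma fpot_b3 (hMj : ¬ PRmarried G C.p j) (hMi : ¬ PRmarried G C.p i)
    (ha : C.p i ≠ some j) (hb : C.p j = some i) : fpot G C i j = 3 := by
  unfold fpot; rw [if_neg (fun h => ha h.1), if_neg hMj, if_neg hMi, if_neg ha, if_pos hb]

lemma fpot_none2 (hMj : ¬ PRmarried G C.p j) (hMi : ¬ PRmarried G C.p i)
    (ha : C.p i ≠ some j) (hb : C.p j ≠ some i) : fpot G C i j = 2 := by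
  unfold fpot; rw [if_neg (fun h => ha h.1), if_neg hMj, if_neg hMi, if_neg ha, if_neg hb]

end FpotEval

lemma sym2_mk_minmax (x y : V) : s(x, y) = s(min x y, max x y) := by
  rcases le_total x y with h | h
  · rw [min_eq_left h, max_eq_right h]
  · rw [min_eq_right h, max_eq_left h, Sym2.eq_swap]

section StepFacts

variable {C C' : Config V} (hstep : Step G C C')
include hstep

lemma step_m (v : V) :
    C'.m v = C.m v ∨ (UpdateEnabled G C v ∧ (C'.m v = true ↔ PRmarried G C.p v)) := by
  rcases hstep.2 v with hm | hu
  · rcases hm with h | ⟨k, h⟩ | ⟨k, h⟩ | ⟨k, h⟩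
    · exact Or.inr ⟨h.1, h.2.2⟩
    · exact Or.inl h.2.2.2.2
    · exact Or.inl h.2.2.2.2.2.2.2
    · exact Or.inl h.2.2.2
  · exact Or.inl hu.2

lemma step_p (v : V) :
    C'.p v = C.p v ∨ (∃ k, DoesMarriageTo G C C' v k) ∨
      (∃ k, DoesSeductionTo G C C' v k) ∨ (∃ k, DoesAbandonmentFrom G C C' v k) := by
  rcases hstep.2 v with hm | hu
  · rcases hm with h | h | h | h
    · exact Or.inl h.2.1
    · exact Or.inr (Or.inl h)
    · exact Or.inr (Or.inr (Or.inl h))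
    · exact Or.inr (Or.inr (Or.inr h))
  · exact Or.inl hu.1

lemma married_frozen (v : V) (h : PRmarried G C.p v) : C'.p v = C.p v := by
  obtain ⟨w, hadj, hv, hw⟩ := h
  rcases step_p hstep v with he | ⟨k, hk⟩ | ⟨k, hk⟩ | ⟨k, hk⟩
  · exact he
  · rw [hk.1.2.1] at hv; exact absurd hv (by simp)
  · rw [hk.1.2.1] at hv; exact absurd hv (by simp)
  · obtain ⟨w', _, hv', hw', _⟩ := hk.1.2
    rw [hv] at hv'; rw [(Option.some_injective V hv').symm] at hw'
    exact absurd hw hw'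

lemma prm_mono (v : V) (h : PRmarried G C.p v) : PRmarried G C'.p v := by
  obtain ⟨w, hadj, hv, hw⟩ := h
  refine ⟨w, hadj, ?_, ?_⟩
  · rw [married_frozen hstep v ⟨w, hadj, hv, hw⟩]; exact hv
  · rw [married_frozen hstep w ⟨v, hadj.symm, hw, hv⟩]; exact hw

/-- If `p v` newly becomes `some w`, it was either a marriage or a seduction to `w`. -/
lemma p_new {v w : V} (hold : C.p v ≠ some w) (hnew : C'.p v = some w) :
    C.p v = none ∧ C.m v = false ∧ G.Adj v w ∧
      (C.p w = some v ∨ (C.p w = none ∧ C.m w = false ∧ v < w ∧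
        (∀ k, G.Adj v k → C.p k ≠ some v))) := by
  rcases step_p hstep v with he | ⟨k, hk⟩ | ⟨k, hk⟩ | ⟨k, hk⟩
  · rw [he] at hnew; exact absurd hnew hold
  · have hkw : k = w := by
      have := hk.2.2.2.1; rw [hnew] at this; exact (Option.some_injective V this.symm)
    subst hkw
    have hnone := hk.1.2.1
    have hmf : C.m v = false := by
      have := hk.1.1
      have : ¬ C.m v = true := fun h => absurd (prm_some (this.mp h)) (by simp [hnone])
      simpa using this
    exact ⟨hnone, hmf, hk.2.1, Or.inl hk.2.2.1⟩
  · have hkw : k = w := by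
      have := hk.2.2.2.2.2.2.1; rw [hnew] at this; exact (Option.some_injective V this.symm)
    subst hkw
    have hnone := hk.1.2.1
    have hmf : C.m v = false := by
      have := hk.1.1
      have : ¬ C.m v = true := fun h => absurd (prm_some (this.mp h)) (by simp [hnone])
      simpa using this
    exact ⟨hnone, hmf, hk.2.1, Or.inr ⟨hk.2.2.1, hk.2.2.2.2.1, hk.2.2.2.1, hk.1.2.2.1⟩⟩
  · rw [hk.2.2.1] at hnew; exact absurd hnew (by simp)

/-- If `m v` newly becomes true, `v` was married already. -/
lemma m_new_true {v : V} (hold : C.m v = false) (hnew : C'.m v = true) :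
    PRmarried G C.p v := by
  rcases step_m hstep v with he | ⟨_, hiff⟩
  · rw [he, hold] at hnew; exact absurd hnew (by simp)
  · exact hiff.mp hnew

/-- If `p v = some w` is lost, it was an abandonment. -/
lemma p_lost {v w : V} (hold : C.p v = some w) (hnew : C'.p v ≠ some w) :
    C'.p v = none ∧ C'.m v = C.m v ∧ (C.m v = true ↔ PRmarried G C.p v) ∧
      C.p w ≠ some v ∧ (C.m w = true ∨ w ≤ v) := by
  rcases step_p hstep v with he | ⟨k, hk⟩ | ⟨k, hk⟩ | ⟨k, hk⟩
  · rw [he] at hnew; exact absurd hold hnew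
  · rw [hk.1.2.1] at hold; exact absurd hold (by simp)
  · rw [hk.1.2.1] at hold; exact absurd hold (by simp)
  · obtain ⟨w', _, hv', hw', hcond⟩ := hk.1.2
    rw [hold] at hv'
    have : w = w' := Option.some_injective V hv'
    subst this
    exact ⟨hk.2.2.1, hk.2.2.2, hk.1.1, hw', hcond⟩

lemma fpot_step {i j : V} (hadj : G.Adj i j) (hlt : i < j) :
    fpot G C' i j ≤ fpot G C i j ∧
      (IJMove G C C' i j → fpot G C' i j < fpot G C i j) := by
  by_cases hab : C.p i = some j ∧ C.p j = some i
  · -- Case 1 : married on this edge; frozen.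
    have hPi : PRmarried G C.p i := ⟨j, hadj, hab.1, hab.2⟩
    have hPj : PRmarried G C.p j := ⟨i, hadj.symm, hab.2, hab.1⟩
    have hfi : C'.p i = C.p i := married_frozen hstep i hPi
    have hfj : C'.p j = C.p j := married_frozen hstep j hPj
    have hL : fpot G C' i j = 0 :=
      fpot_pair (by rw [hfi]; exact hab.1) (by rw [hfj]; exact hab.2)
    have hR : fpot G C i j = 0 := fpot_pair hab.1 hab.2
    refine ⟨by omega, ?_⟩
    intro hmv
    unfold IJMove MSAMoveTo at hmv
    rcases hmv with (hM | hS | hA) | (hM | hS | hA)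
    · exact absurd hM.1.2.1 (by simp [hab.1])
    · exact absurd hS.1.2.1 (by simp [hab.1])
    · obtain ⟨j', _, hpij', hnb', _⟩ := hA.1.2
      rw [hab.1] at hpij'
      rw [← Option.some_injective V hpij'] at hnb'
      exact absurd hab.2 hnb'
    · exact absurd hM.1.2.1 (by simp [hab.2])
    · exact absurd hS.1.2.1 (by simp [hab.2])
    · obtain ⟨i', _, hpji', hna', _⟩ := hA.1.2
      rw [hab.2] at hpji'
      rw [← Option.some_injective V hpji'] at hna'
      exact absurd hab.1 hna'
  by_cases hMj : PRmarried G C.p j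
  · -- Case 2 : j is married (necessarily not to i).
    have hnb : C.p j ≠ some i := by
      intro hb
      obtain ⟨k, _, h1, h2⟩ := hMj
      rw [hb] at h1
      rw [← Option.some_injective V h1] at h2
      exact hab ⟨h2, hb⟩
    have hfj : C'.p j = C.p j := married_frozen hstep j hMj
    have hnb' : C'.p j ≠ some i := by rw [hfj]; exact hnb
    have hMj' : PRmarried G C'.p j := prm_mono hstep j hMj
    have hab' : ¬(C'.p i = some j ∧ C'.p j = some i) := fun h => hnb' h.2
    by_cases ha : C.p i = some j
    · have hR : fpot G C i j = 1 := fpot_mj1 hab hMj ha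
      constructor
      · by_cases ha' : C'.p i = some j
        · rw [fpot_mj1 hab' hMj' ha', hR]
        · rw [fpot_mj0 hab' hMj' ha', hR]; omega
      · intro hmv
        unfold IJMove MSAMoveTo at hmv
        rcases hmv with (hM | hS | hA) | (hM | hS | hA)
        · exact absurd hM.1.2.1 (by simp [ha])
        · exact absurd hS.1.2.1 (by simp [ha])
        · have ha' : C'.p i ≠ some j := by rw [hA.2.2.1]; simp
          rw [fpot_mj0 hab' hMj' ha', hR]; omega
        · exact absurd (prm_some hMj) (by simp [hM.1.2.1])
        · exact absurd hS.2.2.2.1 (not_lt.mpr hlt.le)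
        · exact absurd hA.2.1 hnb
    · have hR : fpot G C i j = 0 := fpot_mj0 hab hMj ha
      have ha' : C'.p i ≠ some j := by
        intro h
        obtain ⟨_, _, _, hcase⟩ := p_new hstep ha h
        rcases hcase with h1 | ⟨h1, _⟩
        · exact hnb h1
        · exact absurd (prm_some hMj) (by simp [h1])
      have hL : fpot G C' i j = 0 := fpot_mj0 hab' hMj' ha'
      refine ⟨by omega, ?_⟩
      intro hmv
      unfold IJMove MSAMoveTo at hmv
      rcases hmv with (hM | hS | hA) | (hM | hS | hA)
      · exact absurd hM.2.2.1 hnb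
      · exact absurd (prm_some hMj) (by simp [hS.2.2.1])
      · exact absurd hA.2.1 ha
      · exact absurd (prm_some hMj) (by simp [hM.1.2.1])
      · exact absurd hS.2.2.2.1 (not_lt.mpr hlt.le)
      · exact absurd hA.2.1 hnb
  by_cases hMi : PRmarried G C.p i
  · -- Case 3 : i is married (necessarily not to j).
    have hna : C.p i ≠ some j := by
      intro ha
      obtain ⟨k, _, h1, h2⟩ := hMi
      rw [ha] at h1
      rw [← Option.some_injective V h1] at h2
      exact hMj ⟨i, hadj.symm, h2, ha⟩
    have hfi : C'.p i = C.p i := married_frozen hstep i hMi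
    have hna' : C'.p i ≠ some j := by rw [hfi]; exact hna
    have hMi' : PRmarried G C'.p i := prm_mono hstep i hMi
    have hab' : ¬(C'.p i = some j ∧ C'.p j = some i) := fun h => hna' h.1
    by_cases hb : C.p j = some i
    · have hR : fpot G C i j = 1 := fpot_mi1 (fun h => hna h.1) hMj hMi hb
      constructor
      · by_cases hMj' : PRmarried G C'.p j
        · rw [fpot_mj0 hab' hMj' hna', hR]; omega
        · by_cases hb' : C'.p j = some i
          · rw [fpot_mi1 hab' hMj' hMi' hb', hR]
          · rw [fpot_mi0 hab' hMj' hMi' hb', hR]; omega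
      · intro hmv
        unfold IJMove MSAMoveTo at hmv
        rcases hmv with (hM | hS | hA) | (hM | hS | hA)
        · exact absurd (prm_some hMi) (by simp [hM.1.2.1])
        · exact absurd (prm_some hMi) (by simp [hS.1.2.1])
        · exact absurd hA.2.1 hna
        · exact absurd hM.1.2.1 (by simp [hb])
        · exact absurd hS.2.2.2.1 (not_lt.mpr hlt.le)
        · have hb' : C'.p j = none := hA.2.2.1
          have hMj' : ¬ PRmarried G C'.p j := not_prm_none hb'
          rw [fpot_mi0 hab' hMj' hMi' (by simp [hb']), hR]; omega
    · have hR : fpot G C i j = 0 := fpot_mi0 (fun h => hna h.1) hMj hMi hb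
      have hb' : C'.p j ≠ some i := by
        intro h
        obtain ⟨_, _, _, hcase⟩ := p_new hstep hb h
        rcases hcase with h1 | ⟨_, _, hji, _⟩
        · exact hna h1
        · exact absurd hji (not_lt.mpr hlt.le)
      have hL : fpot G C' i j = 0 := by
        by_cases hMj' : PRmarried G C'.p j
        · exact fpot_mj0 hab' hMj' hna'
        · exact fpot_mi0 hab' hMj' hMi' hb'
      refine ⟨by omega, ?_⟩
      intro hmv
      unfold IJMove MSAMoveTo at hmv
      rcases hmv with (hM | hS | hA) | (hM | hS | hA)
      · exact absurd hM.2.2.1 hb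
      · exact absurd (prm_some hMi) (by simp [hS.1.2.1])
      · exact absurd hA.2.1 hna
      · exact absurd hM.2.2.1 hna
      · exact absurd hS.2.2.2.1 (not_lt.mpr hlt.le)
      · exact absurd hA.2.1 hb
  by_cases ha : C.p i = some j
  · -- Case 4 : i points at j, j does not point at i, nobody married.
    have hnb : C.p j ≠ some i := fun hb => hab ⟨ha, hb⟩
    by_cases hm : C.m j = true
    · have hR : fpot G C i j = 3 := fpot_a3 hMj hMi ha hnb hm
      refine ⟨by rw [hR]; exact fpot_le_three _ _ _, ?_⟩
      intro hmv
      unfold IJMove MSAMoveTo at hmv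
      rcases hmv with (hM | hS | hA) | (hM | hS | hA)
      · exact absurd hM.1.2.1 (by simp [ha])
      · exact absurd hS.1.2.1 (by simp [ha])
      · have hpi' : C'.p i = none := hA.2.2.1
        have hna' : C'.p i ≠ some j := by simp [hpi']
        have hMi' : ¬ PRmarried G C'.p i := not_prm_none hpi'
        have hb' : C'.p j ≠ some i := by
          intro h
          obtain ⟨_, hmjf, _, _⟩ := p_new hstep hnb h
          rw [hm] at hmjf; exact absurd hmjf (by simp)
        have hab' : ¬(C'.p i = some j ∧ C'.p j = some i) := fun h => hna' h.1
        have hL : fpot G C' i j ≤ 2 := by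
          by_cases hMj' : PRmarried G C'.p j
          · rw [fpot_mj0 hab' hMj' hna']; omega
          · rw [fpot_none2 hMj' hMi' hna' hb']
        rw [hR]; omega
      · have hpj : C.p j = none := hM.1.2.1
        have : ¬ C.m j = true := fun h => absurd (prm_some (hM.1.1.mp h)) (by simp [hpj])
        exact absurd hm this
      · exact absurd hS.2.2.2.1 (not_lt.mpr hlt.le)
      · exact absurd hA.2.1 hnb
    · have hR : fpot G C i j = 1 := fpot_a1 hMj hMi ha hnb hm
      have ha' : C'.p i = some j := by
        by_contra h
        obtain ⟨_, _, _, _, hcond⟩ := p_lost hstep ha h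
        rcases hcond with h1 | h1
        · exact hm h1
        · exact absurd h1 (not_le.mpr hlt)
      have hm' : C'.m j ≠ true := by
        intro h
        have hmjf : C.m j = false := by simpa using hm
        exact hMj (m_new_true hstep hmjf h)
      constructor
      · by_cases hb' : C'.p j = some i
        · rw [fpot_pair ha' hb', hR]; omega
        · have hab' : ¬(C'.p i = some j ∧ C'.p j = some i) := fun h => hb' h.2
          have hMi' : ¬ PRmarried G C'.p i := by
            intro hPP
            obtain ⟨k, _, h1, h2⟩ := hPP
            rw [ha'] at h1
            rw [← Option.some_injective V h1] at h2
            exact hb' h2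
          by_cases hMj' : PRmarried G C'.p j
          · rw [fpot_mj1 hab' hMj' ha', hR]
          · rw [fpot_a1 hMj' hMi' ha' hb' hm', hR]
      · intro hmv
        unfold IJMove MSAMoveTo at hmv
        rcases hmv with (hM | hS | hA) | (hM | hS | hA)
        · exact absurd hM.1.2.1 (by simp [ha])
        · exact absurd hS.1.2.1 (by simp [ha])
        · obtain ⟨j', _, hpij', _, hcond⟩ := hA.1.2
          rw [ha] at hpij'
          have hjj : j = j' := Option.some_injective V hpij'
          rcases hcond with h1 | h1
          · rw [← hjj] at h1; exact absurd h1 hm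
          · rw [← hjj] at h1; exact absurd h1 (not_le.mpr hlt)
        · have hb' : C'.p j = some i := hM.2.2.2.1
          rw [fpot_pair ha' hb', hR]; omega
        · exact absurd hS.2.2.2.1 (not_lt.mpr hlt.le)
        · exact absurd hA.2.1 hnb
  by_cases hb : C.p j = some i
  · -- Case 5 : j points at i, i does not point at j, nobody married.
    have hR : fpot G C i j = 3 := fpot_b3 hMj hMi ha hb
    refine ⟨by rw [hR]; exact fpot_le_three _ _ _, ?_⟩
    intro hmv
    unfold IJMove MSAMoveTo at hmv
    rcases hmv with (hM | hS | hA) | (hM | hS | hA)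
    · -- marriage i to j
      have ha'' : C'.p i = some j := hM.2.2.2.1
      by_cases hb' : C'.p j = some i
      · rw [fpot_pair ha'' hb', hR]; omega
      · obtain ⟨hpj', hmj', hguard, _, _⟩ := p_lost hstep hb hb'
        have hmjf : C.m j = false := by
          have h2 : ¬ C.m j = true := fun h => hMj (hguard.mp h)
          simpa using h2
        have hMj' : ¬ PRmarried G C'.p j := not_prm_none hpj'
        have hMi' : ¬ PRmarried G C'.p i := by
          intro hPP
          obtain ⟨k, _, h1, h2⟩ := hPP
          rw [ha''] at h1
          rw [← Option.some_injective V h1] at h2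
          exact hb' h2
        have hm' : C'.m j ≠ true := by rw [hmj', hmjf]; simp
        rw [fpot_a1 hMj' hMi' ha'' hb' hm', hR]; omega
    · exact absurd hb (hS.1.2.2.1 j hadj)
    · exact absurd hA.2.1 ha
    · exact absurd hM.1.2.1 (by simp [hb])
    · exact absurd hS.2.2.2.1 (not_lt.mpr hlt.le)
    · -- abandonment j from i
      have hpj' : C'.p j = none := hA.2.2.1
      have hb' : C'.p j ≠ some i := by simp [hpj']
      have hMj' : ¬ PRmarried G C'.p j := not_prm_none hpj'
      have hmjf : C.m j = false := by
        have hg := hA.1.1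
        have h2 : ¬ C.m j = true := fun h => hMj (hg.mp h)
        simpa using h2
      have hm' : C'.m j ≠ true := by rw [hA.2.2.2, hmjf]; simp
      by_cases ha' : C'.p i = some j
      · have hMi' : ¬ PRmarried G C'.p i := by
          intro hPP
          obtain ⟨k, _, h1, h2⟩ := hPP
          rw [ha'] at h1
          rw [← Option.some_injective V h1] at h2
          exact hb' h2
        rw [fpot_a1 hMj' hMi' ha' hb' hm', hR]; omega
      · have hab' : ¬(C'.p i = some j ∧ C'.p j = some i) := fun h => ha' h.1
        by_cases hMi' : PRmarried G C'.p i
        · rw [fpot_mi0 hab' hMj' hMi' hb', hR]; omega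
        · rw [fpot_none2 hMj' hMi' ha' hb', hR]; omega
  · -- Case 6 : nobody points, nobody married.
    have hR : fpot G C i j = 2 := fpot_none2 hMj hMi ha hb
    have hbnew : C'.p j ≠ some i := by
      intro h
      obtain ⟨_, _, _, hcase2⟩ := p_new hstep hb h
      rcases hcase2 with h1 | ⟨_, _, hji, _⟩
      · exact ha h1
      · exact absurd hji (not_lt.mpr hlt.le)
    have hkey : C'.p i = some j → fpot G C' i j = 1 := by
      intro ha'
      obtain ⟨hpi, hmi, _, hcase⟩ := p_new hstep ha ha'
      rcases hcase with h1 | ⟨hpj, hmjf, _, _⟩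
      · exact absurd h1 hb
      have hm' : C'.m j ≠ true := fun h => hMj (m_new_true hstep hmjf h)
      have hab' : ¬(C'.p i = some j ∧ C'.p j = some i) := fun h => hbnew h.2
      have hMi' : ¬ PRmarried G C'.p i := by
        intro hPP
        obtain ⟨k, _, h1, h2⟩ := hPP
        rw [ha'] at h1
        rw [← Option.some_injective V h1] at h2
        exact hbnew h2
      by_cases hMj' : PRmarried G C'.p j
      · exact fpot_mj1 hab' hMj' ha'
      · exact fpot_a1 hMj' hMi' ha' hbnew hm'
    constructor
    · by_cases ha' : C'.p i = some j
      · rw [hkey ha', hR]; omega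
      · have hab' : ¬(C'.p i = some j ∧ C'.p j = some i) := fun h => ha' h.1
        by_cases hMj' : PRmarried G C'.p j
        · rw [fpot_mj0 hab' hMj' ha', hR]; omega
        · by_cases hMi' : PRmarried G C'.p i
          · rw [fpot_mi0 hab' hMj' hMi' hbnew, hR]; omega
          · rw [fpot_none2 hMj' hMi' ha' hbnew, hR]
    · intro hmv
      unfold IJMove MSAMoveTo at hmv
      rcases hmv with (hM | hS | hA) | (hM | hS | hA)
      · exact absurd hM.2.2.1 hb
      · rw [hkey hS.2.2.2.2.2.2.1, hR]; omega
      · exact absurd hA.2.1 ha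
      · exact absurd hM.2.2.1 ha
      · exact absurd hS.2.2.2.1 (not_lt.mpr hlt.le)
      · exact absurd hA.2.1 hb

lemma upot_step (v : V) : upot G C' v ≤ upot G C v := by
  have hmono := prm_mono hstep v
  have hm := step_m hstep v
  unfold UpdateEnabled at hm
  unfold upot
  split_ifs <;> first | omega | simp_all

lemma upot_step_strict {v : V} (hu : DoesUpdate G C C' v) : upot G C' v < upot G C v := by
  have hmono := prm_mono hstep v
  obtain ⟨hen, hp, hiff⟩ := hu
  unfold UpdateEnabled at hen
  unfold upot
  split_ifs <;> first | omega | simp_all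


lemma msa_adj {v w : V} (hmv : MSAMoveTo G C C' v w) : G.Adj v w := by
  rcases hmv with h | h | h
  · exact h.2.1
  · exact h.2.1
  · obtain ⟨w', hadj, hp, _⟩ := h.1.2
    rw [h.2.1] at hp
    rw [← Option.some_injective V hp] at hadj
    exact hadj

lemma epot_step {s : Sym2 V} (hs : s ∈ G.edgeSet) : epot G C' s ≤ epot G C s := by
  induction s using Sym2.ind with
  | _ x y =>
    rw [SimpleGraph.mem_edgeSet] at hs
    have hne : x ≠ y := hs.ne
    simp only [epot, Sym2.lift_mk]
    rcases lt_or_gt_of_ne hne with h | h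
    · rw [min_eq_left h.le, max_eq_right h.le]
      exact (fpot_step hstep hs h).1
    · rw [min_eq_right h.le, max_eq_left h.le]
      exact (fpot_step hstep hs.symm h).1

lemma epot_step_strict {v w : V} (hmv : MSAMoveTo G C C' v w) :
    epot G C' s(v, w) < epot G C s(v, w) := by
  have hadj := msa_adj hstep hmv
  have hne : v ≠ w := hadj.ne
  simp only [epot, Sym2.lift_mk]
  rcases lt_or_gt_of_ne hne with h | h
  · rw [min_eq_left h.le, max_eq_right h.le]
    exact (fpot_step hstep hadj h).2 (Or.inl hmv)
  · rw [min_eq_right h.le, max_eq_left h.le]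
    exact (fpot_step hstep hadj.symm h).2 (Or.inr hmv)

lemma pot_step [Fintype V] [DecidableRel G.Adj] : pot G C' < pot G C := by
  obtain ⟨v, hv⟩ := hstep.1
  have hu : ∀ x ∈ Finset.univ, upot G C' x ≤ upot G C x := fun x _ => upot_step hstep x
  have he : ∀ s ∈ G.edgeFinset, epot G C' s ≤ epot G C s := fun s hs =>
    epot_step hstep (SimpleGraph.mem_edgeFinset.mp hs)
  have hu2 : ∑ x, upot G C' x ≤ ∑ x, upot G C x := Finset.sum_le_sum hu
  have he2 : ∑ s ∈ G.edgeFinset, epot G C' s ≤ ∑ s ∈ G.edgeFinset, epot G C s :=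
    Finset.sum_le_sum he
  have hmsa : ∀ w, MSAMoveTo G C C' v w → pot G C' < pot G C := by
    intro w hmv
    have hadj := msa_adj hstep hmv
    have hmem : s(v, w) ∈ G.edgeFinset := by
      rw [SimpleGraph.mem_edgeFinset, SimpleGraph.mem_edgeSet]; exact hadj
    have : ∑ s ∈ G.edgeFinset, epot G C' s < ∑ s ∈ G.edgeFinset, epot G C s :=
      Finset.sum_lt_sum he ⟨s(v, w), hmem, epot_step_strict hstep hmv⟩
    unfold pot; omega
  rcases hv with hU | ⟨w, hM⟩ | ⟨w, hS⟩ | ⟨w, hA⟩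
  · have : ∑ x, upot G C' x < ∑ x, upot G C x :=
      Finset.sum_lt_sum hu ⟨v, Finset.mem_univ v, upot_step_strict hstep hU⟩
    unfold pot; omega
  · exact hmsa w (Or.inl hM)
  · exact hmsa w (Or.inr (Or.inl hS))
  · exact hmsa w (Or.inr (Or.inr hA))

end StepFacts

lemma epot_le_three (C : Config V) (s : Sym2 V) : epot G C s ≤ 3 := by
  induction s using Sym2.ind with
  | _ x y =>
    simp only [epot, Sym2.lift_mk]
    exact fpot_le_three C (min x y) (max x y)

lemma fpot_three {C : Config V} {i j : V} (h : fpot G C i j = 3) :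
    C.p i = some j ∨ C.p j = some i := by
  unfold fpot at h
  split_ifs at h <;> first | omega | tauto

lemma epot_three {C : Config V} {s : Sym2 V} (h : epot G C s = 3) :
    ∃ v w, s = s(v, w) ∧ C.p v = some w := by
  induction s using Sym2.ind with
  | _ x y =>
    simp only [epot, Sym2.lift_mk] at h
    rcases fpot_three h with h1 | h1
    · exact ⟨min x y, max x y, sym2_mk_minmax x y, h1⟩
    · exact ⟨max x y, min x y, by rw [sym2_mk_minmax x y, Sym2.eq_swap], h1⟩

noncomputable def srcOf (C : Config V) (s : Sym2 V) : V :=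
  if h : ∃ v w, s = s(v, w) ∧ C.p v = some w then h.choose else s.out.1

lemma srcOf_spec {C : Config V} {s : Sym2 V}
    (h : ∃ v w, s = s(v, w) ∧ C.p v = some w) :
    ∃ w, s = s(srcOf C s, w) ∧ C.p (srcOf C s) = some w := by
  unfold srcOf; rw [dif_pos h]; exact h.choose_spec

lemma card_three_le [Fintype V] [DecidableRel G.Adj] (C : Config V) :
    (G.edgeFinset.filter (fun s => epot G C s = 3)).card ≤ Fintype.card V := by
  rw [← Finset.card_univ]
  apply Finset.card_le_card_of_injOn (srcOf C) (fun _ _ => Finset.mem_univ _)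
  intro s1 h1 s2 h2 heq
  obtain ⟨w1, hs1, hp1⟩ := srcOf_spec
    (epot_three (G := G) (Finset.mem_filter.mp (Finset.mem_coe.mp h1)).2)
  obtain ⟨w2, hs2, hp2⟩ := srcOf_spec
    (epot_three (G := G) (Finset.mem_filter.mp (Finset.mem_coe.mp h2)).2)
  rw [heq] at hs1 hp1
  rw [hp1] at hp2
  have hww := Option.some_injective V hp2
  exact hs1.trans (by rw [hww]; exact hs2.symm)

lemma sum_upot_le [Fintype V] (C : Config V) :
    ∑ v, upot G C v ≤ 2 * Fintype.card V := by
  calc ∑ v, upot G C v ≤ ∑ _v : V, 2 := Finset.sum_le_sum (fun v _ => upot_le_two C v)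
  _ = 2 * Fintype.card V := by
      rw [Finset.sum_const, smul_eq_mul, Finset.card_univ, mul_comm]

lemma sum_epot_le [Fintype V] [DecidableRel G.Adj] (C : Config V) :
    ∑ s ∈ G.edgeFinset, epot G C s ≤ 2 * G.edgeFinset.card + Fintype.card V := by
  have h1 : ∑ s ∈ G.edgeFinset, epot G C s ≤
      ∑ s ∈ G.edgeFinset, (2 + if epot G C s = 3 then 1 else 0) := by
    apply Finset.sum_le_sum
    intro s _
    have := epot_le_three (G := G) C s
    split_ifs <;> omega
  have h2 : ∑ s ∈ G.edgeFinset, (2 + if epot G C s = 3 then 1 else 0)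
      = 2 * G.edgeFinset.card + (G.edgeFinset.filter (fun s => epot G C s = 3)).card := by
    rw [Finset.sum_add_distrib, Finset.sum_const, smul_eq_mul, mul_comm]
    congr 1
    simp [Finset.sum_boole]
  have h3 := card_three_le (G := G) C
  omega

lemma pot_le [Fintype V] [DecidableRel G.Adj] (C : Config V) :
    pot G C ≤ 3 * Fintype.card V + 2 * G.edgeFinset.card := by
  have h1 := sum_upot_le (G := G) C
  have h2 := sum_epot_le (G := G) C
  unfold pot; omega

end Aux

theorem stabilizes_within_3n_plus_2m [Fintype V] [LinearOrder V] (G : SimpleGraph V)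
    [DecidableRel G.Adj]
    (C : ℕ → Config V) (hvalid : Valid G (C 0))
    (hexec : ∀ t, Step G (C t) (C (t+1)) ∨ (Stable G (C t) ∧ C (t+1) = C t)) :
    Stable G (C (3 * Fintype.card V + 2 * G.edgeFinset.card)) := by
  set T := 3 * Fintype.card V + 2 * G.edgeFinset.card with hT
  have hstable_step : ∀ t, Stable G (C t) → C (t + 1) = C t := by
    intro t hs
    rcases hexec t with hstep | ⟨_, he⟩
    · obtain ⟨v, hv⟩ := hstep.1
      exfalso; apply hs v
      rcases hv with h | ⟨w, h⟩ | ⟨w, h⟩ | ⟨w, h⟩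
      · exact Or.inl h.1
      · exact Or.inr (Or.inl h.1)
      · exact Or.inr (Or.inr (Or.inl h.1))
      · exact Or.inr (Or.inr (Or.inr h.1))
    · exact he
  have hbound : pot G (C 0) ≤ T := pot_le (C 0)
  have hind : ∀ t, Stable G (C t) ∨ pot G (C t) + t ≤ pot G (C 0) := by
    intro t
    induction t with
    | zero => exact Or.inr (by omega)
    | succ n ih =>
      by_cases hs : Stable G (C n)
      · left; rw [hstable_step n hs]; exact hs
      · rcases ih with h | h
        · exact absurd h hs
        · rcases hexec n with hstep | ⟨hs', _⟩
          · right; have := pot_step hstep; omega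
          · exact absurd hs' hs
  by_contra hns
  rcases hind T with h | h
  · exact hns h
  rcases hexec T with hstep | ⟨hs', _⟩
  · have h2 := pot_step hstep
    have h3 : 0 ≤ pot G (C (T + 1)) := Nat.zero_le _
    omega
  · exact hns hs'
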